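/- Let 0 ≤ i < j ≤ n−1. If δ(i) = δ(j), then 2n + e/2 − 2 ≥ (3/2)(i+j) ≥ 2n + e/2 − 4. -/

import Mathlib

open Finset

/-- `t = s^(e/2)` as a real number. -/
noncomputable def tval (s e : ℕ) : ℝ := (s : ℝ) ^ ((e : ℝ) / 2)

/-- `δ(i) = |Δ_i|`, the number of `i`-dimensional singular subspaces of a finite
polar space of rank `n` with orders `(s, …, s, t)`, `t = s^(e/2)`. -/
noncomputable def delta (n s e : ℕ) (i : ℤ) : ℝ :=
  (∏ u ∈ Finset.Icc (0:ℤ) i, ((s:ℝ) ^ ((n:ℤ) - u - 1) * tval s e + 1)) *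
  (∏ u ∈ Finset.Icc (0:ℤ) i, ((s:ℝ) ^ ((n:ℤ) - u) - 1)) /
  (∏ u ∈ Finset.Icc (0:ℤ) i, ((s:ℝ) ^ (u + 1) - 1))

lemma sum_Ioc_cast_aux (i j : ℤ) (h : i ≤ j) :
    (∑ u ∈ Finset.Ioc i j, (u:ℝ)) = ((j:ℝ) - i) * ((i:ℝ) + j + 1) / 2 := by
  refine Int.le_induction (motive := fun j _ => (∑ u ∈ Finset.Ioc i j, (u:ℝ)) = ((j:ℝ) - i) * ((i:ℝ) + j + 1) / 2) ?_ ?_ j h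
  · simp
  · intro k hk ih
    have hins : Finset.Ioc i (k+1) = insert (k+1) (Finset.Ioc i k) := by
      ext x; simp; omega
    rw [hins, Finset.sum_insert (by simp), ih]
    push_cast; ring

lemma factor_bounds (S α β γ : ℝ) (hS2 : 2 ≤ S) (hα0 : 0 ≤ α) (hβ1 : 1 ≤ β) (hγ1 : 1 ≤ γ) :
    S ^ (α + (β - 1) - γ) < (S ^ α + 1) * (S ^ β - 1) / (S ^ γ - 1) ∧
    (S ^ α + 1) * (S ^ β - 1) / (S ^ γ - 1) < S ^ ((α + 1) + β - (γ - 1)) := by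
  have hS1 : (1:ℝ) < S := by linarith
  have hS0 : (0:ℝ) < S := by linarith
  have hone : ∀ y : ℝ, 0 ≤ y → 1 ≤ S ^ y := fun y hy => Real.one_le_rpow hS1.le hy
  have hpα : 0 < S ^ α := Real.rpow_pos_of_pos hS0 _
  have hpβ : 0 < S ^ (β - 1) := Real.rpow_pos_of_pos hS0 _
  have hpγ : 0 < S ^ (γ - 1) := Real.rpow_pos_of_pos hS0 _
  have hpα1 : 0 < S ^ (α + 1) := Real.rpow_pos_of_pos hS0 _
  have hpβ0 : 0 < S ^ β := Real.rpow_pos_of_pos hS0 _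
  have hpγ0 : 0 < S ^ γ := Real.rpow_pos_of_pos hS0 _
  have hApos : (0:ℝ) < S ^ α + 1 := by linarith
  have hBpos : (0:ℝ) < S ^ β - 1 := by
    have h2 : S ^ (β - 1) * S = S ^ β := by
      rw [← Real.rpow_add_one (ne_of_gt hS0)]; ring_nf
    nlinarith [hone (β - 1) (by linarith), mul_le_mul_of_nonneg_left hS2 hpβ.le]
  have hCpos : (0:ℝ) < S ^ γ - 1 := by
    have h2 : S ^ (γ - 1) * S = S ^ γ := by
      rw [← Real.rpow_add_one (ne_of_gt hS0)]; ring_nf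
    nlinarith [hone (γ - 1) (by linarith), mul_le_mul_of_nonneg_left hS2 hpγ.le]
  have hA1 : S ^ α < S ^ α + 1 := by linarith
  have hA2 : S ^ α + 1 ≤ S ^ (α + 1) := by
    rw [Real.rpow_add hS0, Real.rpow_one]
    nlinarith [hone α hα0, mul_le_mul_of_nonneg_left hS2 hpα.le]
  have hB2 : S ^ β - 1 < S ^ β := by linarith
  have hB1 : S ^ (β - 1) ≤ S ^ β - 1 := by
    have h2 : S ^ (β - 1) * S = S ^ β := by
      rw [← Real.rpow_add_one (ne_of_gt hS0)]; ring_nf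
    nlinarith [hone (β - 1) (by linarith), mul_le_mul_of_nonneg_left hS2 hpβ.le]
  have hC2 : S ^ γ - 1 ≤ S ^ γ := by linarith
  have hC1 : S ^ (γ - 1) ≤ S ^ γ - 1 := by
    have h2 : S ^ (γ - 1) * S = S ^ γ := by
      rw [← Real.rpow_add_one (ne_of_gt hS0)]; ring_nf
    nlinarith [hone (γ - 1) (by linarith), mul_le_mul_of_nonneg_left hS2 hpγ.le]
  constructor
  · rw [Real.rpow_sub hS0, Real.rpow_add hS0]
    have hnum : S ^ α * S ^ (β - 1) < (S ^ α + 1) * (S ^ β - 1) := by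
      calc S ^ α * S ^ (β - 1) < (S ^ α + 1) * S ^ (β - 1) := (mul_lt_mul_iff_left₀ hpβ).mpr hA1
        _ ≤ (S ^ α + 1) * (S ^ β - 1) := mul_le_mul_of_nonneg_left hB1 hApos.le
    rw [div_lt_div_iff₀ hpγ0 hCpos]
    nlinarith [mul_le_mul_of_nonneg_left hC2 (mul_pos hpα hpβ).le,
      mul_lt_mul_of_pos_right hnum hpγ0]
  · rw [Real.rpow_sub hS0, Real.rpow_add hS0]
    have hnum2 : (S ^ α + 1) * (S ^ β - 1) < S ^ (α + 1) * S ^ β := by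
      calc (S ^ α + 1) * (S ^ β - 1) ≤ S ^ (α + 1) * (S ^ β - 1) :=
            mul_le_mul_of_nonneg_right hA2 hBpos.le
        _ < S ^ (α + 1) * S ^ β := (mul_lt_mul_iff_right₀ hpα1).mpr hB2
    rw [div_lt_div_iff₀ hCpos hpγ]
    nlinarith [mul_lt_mul_of_pos_right hnum2 hpγ,
      mul_le_mul_of_nonneg_left hC1 (mul_pos hpα1 hpβ0).le]

set_option maxHeartbeats 1000000 in
theorem stmt_4 (n s e : ℕ) (hn : 3 ≤ n) (hs : 2 ≤ s) (he : e ≤ 4)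
    (i j : ℤ) (hi : 0 ≤ i) (hij : i < j) (hj : j ≤ (n:ℤ) - 1)
    (h : delta n s e i = delta n s e j) :
    2 * (n:ℝ) + (e:ℝ)/2 - 2 ≥ (3/2) * ((i:ℝ) + (j:ℝ)) ∧
    (3/2) * ((i:ℝ) + (j:ℝ)) ≥ 2 * (n:ℝ) + (e:ℝ)/2 - 4 := by
  have hS2 : (2:ℝ) ≤ (s:ℝ) := by exact_mod_cast hs
  have hS1 : (1:ℝ) < (s:ℝ) := by linarith
  have hS0 : (0:ℝ) < (s:ℝ) := by linarith
  set S : ℝ := (s:ℝ) with hSdef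
  set A : ℤ → ℝ := fun u => S ^ ((n:ℤ) - u - 1) * tval s e + 1 with hA
  set B : ℤ → ℝ := fun u => S ^ ((n:ℤ) - u) - 1 with hB
  set C : ℤ → ℝ := fun u => S ^ (u + 1) - 1 with hC
  have htpos : 0 < tval s e := Real.rpow_pos_of_pos hS0 _
  have hApos : ∀ u : ℤ, 0 < A u := fun u => by
    have h1 : (0:ℝ) < S ^ ((n:ℤ) - u - 1) := zpow_pos hS0 _
    have h2 := mul_pos h1 htpos
    simp only [hA]; linarith
  have hBpos : ∀ u : ℤ, u ≤ (n:ℤ) - 1 → 0 < B u := fun u hu => by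
    have : (1:ℝ) < S ^ ((n:ℤ) - u) := one_lt_zpow₀ hS1 (by omega)
    simp only [hB]; linarith
  have hCpos : ∀ u : ℤ, 0 ≤ u → 0 < C u := fun u hu => by
    have : (1:ℝ) < S ^ (u + 1) := one_lt_zpow₀ hS1 (by omega)
    simp only [hC]; linarith
  -- split products
  have key : ∀ f : ℤ → ℝ, ∏ u ∈ Finset.Icc (0:ℤ) j, f u =
      (∏ u ∈ Finset.Icc (0:ℤ) i, f u) * ∏ u ∈ Finset.Ioc i j, f u := by
    intro f
    have hun : Finset.Icc (0:ℤ) i ∪ Finset.Ioc i j = Finset.Icc 0 j := by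
      ext x; simp; omega
    rw [← hun, Finset.prod_union (Finset.disjoint_left.mpr
      (by intro x hx hx'; simp at hx hx'; omega))]
  have hrel : delta n s e j = delta n s e i * ∏ u ∈ Finset.Ioc i j, (A u * B u / C u) := by
    unfold delta
    rw [key, key, key, Finset.prod_div_distrib, Finset.prod_mul_distrib]
    ring
  have hdpos : 0 < delta n s e i := by
    unfold delta
    have h1 : 0 < ∏ u ∈ Finset.Icc (0:ℤ) i, A u :=
      Finset.prod_pos fun u hu => hApos u
    have h2 : 0 < ∏ u ∈ Finset.Icc (0:ℤ) i, B u :=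
      Finset.prod_pos fun u hu => hBpos u (by simp at hu; omega)
    have h3 : 0 < ∏ u ∈ Finset.Icc (0:ℤ) i, C u :=
      Finset.prod_pos fun u hu => hCpos u (by simp at hu; omega)
    positivity
  have hprod : ∏ u ∈ Finset.Ioc i j, (A u * B u / C u) = 1 := by
    have h2 := h.trans hrel
    have h3 : delta n s e i * 1 = delta n s e i * ∏ u ∈ Finset.Ioc i j, (A u * B u / C u) := by
      rw [mul_one]; exact h2
    exact (mul_left_cancel₀ (ne_of_gt hdpos) h3).symm
  -- exponents
  set x : ℤ → ℝ := fun u => 2*(n:ℝ) + (e:ℝ)/2 - 3*(u:ℝ) with hx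
  have hz2r : ∀ m : ℤ, S ^ m = S ^ (m:ℝ) := fun m => (Real.rpow_intCast S m).symm
  have hone : ∀ y : ℝ, 0 ≤ y → 1 ≤ S ^ y := fun y hy => Real.one_le_rpow hS1.le hy
  have habound : ∀ u ∈ Finset.Ioc i j,
      S ^ (x u - 3) < A u * B u / C u ∧ A u * B u / C u < S ^ (x u) := by
    intro u hu
    simp only [Finset.mem_Ioc] at hu
    have hu1 : (1:ℝ) ≤ (u:ℝ) := by exact_mod_cast (by omega : (1:ℤ) ≤ u)
    have hun : (u:ℝ) ≤ (n:ℝ) - 1 := by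
      have h1 : (u:ℝ) ≤ ((n:ℤ):ℝ) - 1 := by exact_mod_cast (by omega : u ≤ (n:ℤ) - 1)
      simpa using h1
    have he0 : (0:ℝ) ≤ (e:ℝ) := by positivity
    have hAeq : A u = S ^ ((n:ℝ) - (u:ℝ) - 1 + (e:ℝ)/2) + 1 := by
      simp only [hA, tval, hz2r, ← hSdef, ← Real.rpow_add hS0]
      congr 2
      push_cast; ring
    have hBeq : B u = S ^ ((n:ℝ) - (u:ℝ)) - 1 := by
      simp only [hB, hz2r]
      congr 2
      push_cast; ring
    have hCeq : C u = S ^ ((u:ℝ) + 1) - 1 := by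
      simp only [hC, hz2r]
      congr 2
      push_cast; ring
    obtain ⟨L, U⟩ := factor_bounds S ((n:ℝ) - (u:ℝ) - 1 + (e:ℝ)/2) ((n:ℝ) - (u:ℝ))
      ((u:ℝ) + 1) hS2 (by linarith) (by linarith) (by linarith)
    have e1 : x u - 3 = ((n:ℝ) - (u:ℝ) - 1 + (e:ℝ)/2) + (((n:ℝ) - (u:ℝ)) - 1) - ((u:ℝ) + 1) := by
      simp only [hx]; ring
    have e2 : x u = (((n:ℝ) - (u:ℝ) - 1 + (e:ℝ)/2) + 1) + ((n:ℝ) - (u:ℝ)) - (((u:ℝ) + 1) - 1) := by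
      simp only [hx]; ring
    rw [hAeq, hBeq, hCeq, e1, e2]
    exact ⟨L, U⟩
  -- products to sums via log
  have hlogS : 0 < Real.log S := Real.log_pos hS1
  have habcpos : ∀ u ∈ Finset.Ioc i j, 0 < A u * B u / C u := by
    intro u hu
    simp only [Finset.mem_Ioc] at hu
    exact div_pos (mul_pos (hApos u) (hBpos u (by omega))) (hCpos u (by omega))
  have hnonempty : (Finset.Ioc i j).Nonempty := ⟨j, by simp [hij]⟩
  have hlogsum : (∑ u ∈ Finset.Ioc i j, Real.log (A u * B u / C u)) = 0 := by
    rw [← Real.log_prod (fun u hu => ne_of_gt (habcpos u hu)), hprod, Real.log_one]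
  have hsum1 : ∑ u ∈ Finset.Ioc i j, (x u - 3) * Real.log S < 0 := by
    rw [← hlogsum]
    refine Finset.sum_lt_sum_of_nonempty hnonempty fun u hu => ?_
    have hb := (habound u hu).1
    have := Real.log_lt_log (Real.rpow_pos_of_pos hS0 _) hb
    rwa [Real.log_rpow hS0] at this
  have hsum2 : 0 < ∑ u ∈ Finset.Ioc i j, x u * Real.log S := by
    rw [← hlogsum]
    refine Finset.sum_lt_sum_of_nonempty hnonempty fun u hu => ?_
    have hb := (habound u hu).2
    have := Real.log_lt_log (habcpos u hu) hb
    rwa [Real.log_rpow hS0] at this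
  -- compute the sums
  have hcard : ((Finset.Ioc i j).card : ℝ) = (j:ℝ) - i := by
    rw [Int.card_Ioc]
    have h1 : ((j - i).toNat : ℤ) = j - i := Int.toNat_of_nonneg (by omega)
    have h2 : (((j - i).toNat : ℤ) : ℝ) = ((j:ℝ) - i) := by rw [h1]; push_cast; ring
    exact_mod_cast h2
  have hsx : ∑ u ∈ Finset.Ioc i j, x u
      = ((j:ℝ) - i) * (2*(n:ℝ) + (e:ℝ)/2) - 3 * (((j:ℝ) - i) * ((i:ℝ) + j + 1) / 2) := by
    calc ∑ u ∈ Finset.Ioc i j, x u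
        = ∑ u ∈ Finset.Ioc i j, ((2*(n:ℝ) + (e:ℝ)/2) + (-3) * (u:ℝ)) :=
          Finset.sum_congr rfl fun u _ => by simp only [hx]; ring
      _ = (Finset.Ioc i j).card • (2*(n:ℝ) + (e:ℝ)/2) + (-3) * ∑ u ∈ Finset.Ioc i j, (u:ℝ) := by
          rw [Finset.sum_add_distrib, Finset.sum_const, Finset.mul_sum]
      _ = _ := by
          rw [sum_Ioc_cast_aux i j hij.le, nsmul_eq_mul, hcard]; ring
  have hsx3 : ∑ u ∈ Finset.Ioc i j, (x u - 3)
      = ((j:ℝ) - i) * (2*(n:ℝ) + (e:ℝ)/2 - 3) - 3 * (((j:ℝ) - i) * ((i:ℝ) + j + 1) / 2) := by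
    rw [Finset.sum_sub_distrib, hsx, Finset.sum_const, nsmul_eq_mul, hcard]; ring
  have hneg : (∑ u ∈ Finset.Ioc i j, (x u - 3)) < 0 := by
    by_contra h'
    push_neg at h'
    rw [← Finset.sum_mul] at hsum1
    exact absurd hsum1 (not_lt.mpr (mul_nonneg h' hlogS.le))
  have hposx : 0 < ∑ u ∈ Finset.Ioc i j, x u := by
    by_contra h'
    push_neg at h'
    rw [← Finset.sum_mul] at hsum2
    nlinarith [hsum2, mul_nonneg (neg_nonneg.mpr h') hlogS.le]
  have hM : (0:ℝ) < (j:ℝ) - i := by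
    have : (i:ℝ) < (j:ℝ) := by exact_mod_cast hij
    linarith
  rw [hsx3] at hneg
  rw [hsx] at hposx
  have k1 : 2*(n:ℝ) + (e:ℝ)/2 - 3 - 3*((i:ℝ) + j + 1)/2 < 0 := by
    by_contra h'
    push_neg at h'
    have := mul_nonneg hM.le h'
    nlinarith
  have k2 : 0 < 2*(n:ℝ) + (e:ℝ)/2 - 3*((i:ℝ) + j + 1)/2 := by
    by_contra h'
    push_neg at h'
    nlinarith [mul_nonneg hM.le (neg_nonneg.mpr h')]
  -- integrality step
  have r1 : (4*(n:ℝ) + (e:ℝ)) < 3*((i:ℝ) + (j:ℝ)) + 9 := by linarith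
  have r2 : 3*((i:ℝ) + (j:ℝ)) + 3 < 4*(n:ℝ) + (e:ℝ) := by linarith
  have z1 : 4*(n:ℤ) + (e:ℤ) < 3*(i + j) + 9 := by exact_mod_cast r1
  have z2 : 3*(i + j) + 3 < 4*(n:ℤ) + (e:ℤ) := by exact_mod_cast r2
  have z1' : 4*(n:ℤ) + (e:ℤ) ≤ 3*(i + j) + 8 := by omega
  have z2' : 3*(i + j) + 4 ≤ 4*(n:ℤ) + (e:ℤ) := by omega
  have r1' : 4*(n:ℝ) + (e:ℝ) ≤ 3*((i:ℝ) + (j:ℝ)) + 8 := by exact_mod_cast z1'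
  have r2' : 3*((i:ℝ) + (j:ℝ)) + 4 ≤ 4*(n:ℝ) + (e:ℝ) := by exact_mod_cast z2'
  constructor <;> [linarith; linarith]
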